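/- Let κ ∈ (0,1) and f_κ(y) = y^{κ-1} e^{-y} for y > 0. Then as x → ∞, ∫_0^∞ f_κ(y)·1(f_κ(y) > x) dy ~ κ^{-1} x^{-κ/(1-κ)}. -/

import Mathlib

open Real MeasureTheory Set Filter Asymptotics

private lemma aux_meas (κ : ℝ) : Measurable fun y : ℝ => y ^ (κ - 1) * Real.exp (-y) := by
  fun_prop

private lemma aux_int_rpow (κ : ℝ) (hκ0 : 0 < κ) (t : ℝ) (ht : 0 < t) :
    IntegrableOn (fun y : ℝ => y ^ (κ - 1)) (Set.Ioo 0 t) := by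
  have := (intervalIntegral.intervalIntegrable_rpow' (a := 0) (b := t)
    (by linarith : (-1:ℝ) < κ - 1))
  rw [intervalIntegrable_iff_integrableOn_Ioc_of_le ht.le] at this
  exact this.mono_set Set.Ioo_subset_Ioc_self

private lemma aux_int_f (κ : ℝ) (hκ0 : 0 < κ) (t : ℝ) (ht : 0 < t) :
    IntegrableOn (fun y : ℝ => y ^ (κ - 1) * Real.exp (-y)) (Set.Ioo 0 t) := by
  refine MeasureTheory.Integrable.mono (aux_int_rpow κ hκ0 t ht)
    ((aux_meas κ).aestronglyMeasurable.restrict) ?_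
  filter_upwards [ae_restrict_mem measurableSet_Ioo] with y hy
  have hy0 : 0 < y := hy.1
  have h1 : 0 ≤ y ^ (κ - 1) := Real.rpow_nonneg hy0.le _
  have h2 : Real.exp (-y) ≤ 1 := Real.exp_le_one_iff.mpr (by linarith)
  rw [Real.norm_eq_abs, Real.norm_eq_abs, abs_of_nonneg (by positivity),
    abs_of_nonneg h1]
  calc y ^ (κ - 1) * Real.exp (-y) ≤ y ^ (κ - 1) * 1 := by
        exact mul_le_mul_of_nonneg_left h2 h1
    _ = y ^ (κ - 1) := by ring

private lemma aux_val_rpow (κ : ℝ) (hκ0 : 0 < κ) (t : ℝ) (ht : 0 < t) :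
    ∫ y in Set.Ioo 0 t, y ^ (κ - 1) = t ^ κ / κ := by
  rw [← MeasureTheory.integral_Ioc_eq_integral_Ioo, ← intervalIntegral.integral_of_le ht.le,
    integral_rpow (Or.inl (by linarith))]
  rw [Real.zero_rpow (by linarith : κ - 1 + 1 ≠ 0)]
  ring_nf

private lemma aux_upper (κ : ℝ) (hκ0 : 0 < κ) (t : ℝ) (ht : 0 < t) :
    ∫ y in Set.Ioo 0 t, y ^ (κ - 1) * Real.exp (-y) ≤ t ^ κ / κ := by
  rw [← aux_val_rpow κ hκ0 t ht]
  refine setIntegral_mono_on (aux_int_f κ hκ0 t ht) (aux_int_rpow κ hκ0 t ht)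
    measurableSet_Ioo ?_
  intro y hy
  have h1 : 0 ≤ y ^ (κ - 1) := Real.rpow_nonneg hy.1.le _
  have h2 : Real.exp (-y) ≤ 1 := Real.exp_le_one_iff.mpr (by linarith [hy.1])
  calc y ^ (κ - 1) * Real.exp (-y) ≤ y ^ (κ - 1) * 1 := mul_le_mul_of_nonneg_left h2 h1
    _ = y ^ (κ - 1) := by ring

private lemma aux_lower (κ : ℝ) (hκ0 : 0 < κ) (t : ℝ) (ht : 0 < t) :
    Real.exp (-t) * (t ^ κ / κ) ≤ ∫ y in Set.Ioo 0 t, y ^ (κ - 1) * Real.exp (-y) := by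
  have h : Real.exp (-t) * (t ^ κ / κ)
      = ∫ y in Set.Ioo 0 t, Real.exp (-t) * y ^ (κ - 1) := by
    rw [MeasureTheory.integral_const_mul, aux_val_rpow κ hκ0 t ht]
  rw [h]
  refine setIntegral_mono_on ((aux_int_rpow κ hκ0 t ht).const_mul _)
    (aux_int_f κ hκ0 t ht) measurableSet_Ioo ?_
  intro y hy
  have h1 : 0 ≤ y ^ (κ - 1) := Real.rpow_nonneg hy.1.le _
  have h2 : Real.exp (-t) ≤ Real.exp (-y) := Real.exp_le_exp.mpr (by linarith [hy.2])
  calc Real.exp (-t) * y ^ (κ - 1) ≤ Real.exp (-y) * y ^ (κ - 1) :=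
        mul_le_mul_of_nonneg_right h2 h1
    _ = y ^ (κ - 1) * Real.exp (-y) := by ring

theorem stmt12 (κ : ℝ) (hκ0 : 0 < κ) (hκ1 : κ < 1) :
    Asymptotics.IsEquivalent Filter.atTop
      (fun x => ∫ y in Set.Ioi (0:ℝ),
        (if x < y ^ (κ - 1) * Real.exp (-y) then y ^ (κ - 1) * Real.exp (-y) else 0))
      (fun x => κ⁻¹ * x ^ (-κ / (1 - κ))) := by
  have hp : 0 < 1 - κ := by linarith
  set f : ℝ → ℝ := fun y => y ^ (κ - 1) * Real.exp (-y) with hfdef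
  set I : ℝ → ℝ := fun x => ∫ y in Set.Ioi (0:ℝ), (if x < f y then f y else 0) with hIdef
  set D : ℝ → ℝ := fun x => κ⁻¹ * x ^ (-κ / (1 - κ)) with hDdef
  set A : ℝ → ℝ := fun x => x ^ (-(1 - κ)⁻¹) with hAdef
  set C : ℝ → ℝ := fun x => Real.exp (-(A x) / (1 - κ)) with hCdef
  set B : ℝ → ℝ := fun x => A x * C x with hBdef
  set L : ℝ → ℝ := fun x => Real.exp (-(B x) + (-(A x) / (1 - κ)) * κ) with hLdef
  -- limits of A, C, B, L
  have hA : Tendsto A atTop (nhds 0) := by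
    simpa [hAdef] using tendsto_rpow_neg_atTop (by positivity : (0:ℝ) < (1 - κ)⁻¹)
  have h1 : Tendsto (fun x => -(A x) / (1 - κ)) atTop (nhds 0) := by
    simpa using hA.neg.div_const (1 - κ)
  have hC : Tendsto C atTop (nhds 1) := by
    simpa [hCdef, Function.comp_def] using (Real.continuous_exp.tendsto 0).comp h1
  have hB : Tendsto B atTop (nhds 0) := by
    simpa using hA.mul hC
  have hL : Tendsto L atTop (nhds 1) := by
    have hg : Tendsto (fun x => -(B x) + (-(A x) / (1 - κ)) * κ) atTop (nhds 0) := by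
      simpa using hB.neg.add (h1.mul_const κ)
    simpa [hLdef, Function.comp_def] using (Real.continuous_exp.tendsto 0).comp hg
  -- eventual bounds
  have hEv : ∀ᶠ x in atTop, L x ≤ I x / D x ∧ I x / D x ≤ 1 := by
    filter_upwards [eventually_ge_atTop (1:ℝ)] with x hx1
    have hx0 : (0:ℝ) < x := lt_of_lt_of_le one_pos hx1
    have hA0 : 0 < A x := Real.rpow_pos_of_pos hx0 _
    have hAκ : A x ^ (κ - 1) = x := by
      rw [hAdef, ← Real.rpow_mul hx0.le]
      have : -(1 - κ)⁻¹ * (κ - 1) = 1 := by field_simp; ring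
      rw [this, Real.rpow_one]
    have hAκ2 : A x ^ κ = x ^ (-κ / (1 - κ)) := by
      rw [hAdef, ← Real.rpow_mul hx0.le]
      congr 1
      field_simp
    have hC0 : 0 < C x := Real.exp_pos _
    have hC1 : C x ≤ 1 := Real.exp_le_one_iff.mpr
      (div_nonpos_of_nonpos_of_nonneg (by linarith) (by linarith))
    have hB0 : 0 < B x := mul_pos hA0 hC0
    have hBA : B x ≤ A x := by
      calc B x = A x * C x := rfl
        _ ≤ A x * 1 := mul_le_mul_of_nonneg_left hC1 hA0.le
        _ = A x := by ring
    have hD0 : 0 < D x := by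
      have := Real.rpow_pos_of_pos hx0 (-κ / (1 - κ))
      positivity
    -- rewrite I x as a set integral of f
    have hS : MeasurableSet {y : ℝ | x < f y} := measurableSet_lt measurable_const (aux_meas κ)
    have hIeq : I x = ∫ y in Set.Ioi 0 ∩ {y : ℝ | x < f y}, f y := by
      rw [hIdef, ← setIntegral_indicator hS]
      congr 1 with y
    -- inclusions
    have hsub2 : Set.Ioi 0 ∩ {y : ℝ | x < f y} ⊆ Set.Ioo 0 (A x) := by
      rintro y ⟨hy0, hyS⟩
      have hy0 : (0:ℝ) < y := hy0
      refine ⟨hy0, ?_⟩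
      have h2 : Real.exp (-y) ≤ 1 := Real.exp_le_one_iff.mpr (by linarith)
      have hxy : x < y ^ (κ - 1) := by
        have : f y ≤ y ^ (κ - 1) := by
          calc y ^ (κ - 1) * Real.exp (-y) ≤ y ^ (κ - 1) * 1 :=
              mul_le_mul_of_nonneg_left h2 (Real.rpow_nonneg hy0.le _)
            _ = y ^ (κ - 1) := by ring
        exact lt_of_lt_of_le hyS this
      rw [← hAκ] at hxy
      exact (Real.rpow_lt_rpow_iff_of_neg hA0 hy0 (by linarith)).mp hxy
    have hsub1 : Set.Ioo 0 (B x) ⊆ Set.Ioi 0 ∩ {y : ℝ | x < f y} := by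
      rintro y ⟨hy0, hyB⟩
      refine ⟨hy0, ?_⟩
      have k1 : B x ^ (κ - 1) < y ^ (κ - 1) :=
        (Real.rpow_lt_rpow_iff_of_neg hB0 hy0 (by linarith)).mpr hyB
      have k2 : Real.exp (-(B x)) < Real.exp (-y) := Real.exp_lt_exp.mpr (by linarith)
      have k3 : B x ^ (κ - 1) * Real.exp (-(B x)) < y ^ (κ - 1) * Real.exp (-y) :=
        mul_lt_mul'' k1 k2 (Real.rpow_nonneg hB0.le _) (Real.exp_pos _).le
      have hCκ : C x ^ (κ - 1) = Real.exp (A x) := by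
        rw [show C x = Real.exp (-(A x) / (1 - κ)) from rfl, ← Real.exp_mul]
        congr 1
        field_simp
        ring
      have k4 : B x ^ (κ - 1) * Real.exp (-(B x)) = x * Real.exp (A x - B x) := by
        rw [show B x ^ (κ - 1) = (A x * C x) ^ (κ - 1) from rfl,
          Real.mul_rpow hA0.le hC0.le, hAκ, hCκ, Real.exp_sub, Real.exp_neg]
        field_simp
      have k5 : x ≤ B x ^ (κ - 1) * Real.exp (-(B x)) := by
        rw [k4]
        nth_rewrite 1 [← mul_one x]
        exact mul_le_mul_of_nonneg_left (Real.one_le_exp (by linarith)) (by linarith)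
      exact lt_of_le_of_lt k5 k3
    -- integral bounds
    have hfint : IntegrableOn f (Set.Ioo 0 (A x)) := aux_int_f κ hκ0 _ hA0
    have hfintS : IntegrableOn f (Set.Ioi 0 ∩ {y : ℝ | x < f y}) := hfint.mono_set hsub2
    have hnn : ∀ (s : Set ℝ), MeasurableSet s → s ⊆ Set.Ioi 0 →
        0 ≤ᵐ[volume.restrict s] f := by
      intro s hs hsub
      filter_upwards [ae_restrict_mem hs] with y hy
      have : (0:ℝ) < y := hsub hy
      have := Real.rpow_nonneg this.le (κ - 1)
      positivity
    have hIhigh : I x ≤ A x ^ κ / κ := by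
      rw [hIeq]
      calc ∫ y in Set.Ioi 0 ∩ {y : ℝ | x < f y}, f y
          ≤ ∫ y in Set.Ioo 0 (A x), f y := by
            refine setIntegral_mono_set hfint
              (hnn _ measurableSet_Ioo Set.Ioo_subset_Ioi_self) (hsub2.eventuallyLE)
        _ ≤ A x ^ κ / κ := aux_upper κ hκ0 _ hA0
    have hIlow : Real.exp (-(B x)) * (B x ^ κ / κ) ≤ I x := by
      rw [hIeq]
      calc Real.exp (-(B x)) * (B x ^ κ / κ)
          ≤ ∫ y in Set.Ioo 0 (B x), f y := aux_lower κ hκ0 _ hB0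
        _ ≤ ∫ y in Set.Ioi 0 ∩ {y : ℝ | x < f y}, f y :=
            setIntegral_mono_set hfintS
              (hnn _ ((measurableSet_Ioi).inter hS) Set.inter_subset_left)
              (hsub1.eventuallyLE)
    have hDA : A x ^ κ / κ = D x := by
      rw [show D x = κ⁻¹ * x ^ (-κ / (1 - κ)) from rfl, ← hAκ2]
      ring
    constructor
    · rw [le_div_iff₀ hD0]
      have hBκ : B x ^ κ = A x ^ κ * Real.exp (-(A x) / (1 - κ) * κ) := by
        rw [show B x ^ κ = (A x * C x) ^ κ from rfl, Real.mul_rpow hA0.le hC0.le,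
          show C x = Real.exp (-(A x) / (1 - κ)) from rfl, ← Real.exp_mul]
      calc L x * D x = Real.exp (-(B x)) * (B x ^ κ / κ) := by
            rw [show L x = Real.exp (-(B x) + -(A x) / (1 - κ) * κ) from rfl,
              show D x = κ⁻¹ * x ^ (-κ / (1 - κ)) from rfl, ← hAκ2, Real.exp_add, hBκ]
            ring
        _ ≤ I x := hIlow
    · rw [div_le_one hD0, ← hDA]
      exact hIhigh
  -- conclude
  have hratio : Tendsto (fun x => I x / D x) atTop (nhds 1) :=
    tendsto_of_tendsto_of_tendsto_of_le_of_le' hL tendsto_const_nhds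
      (hEv.mono fun x h => h.1) (hEv.mono fun x h => h.2)
  have hne : ∀ᶠ x in atTop, D x ≠ 0 := by
    filter_upwards [eventually_gt_atTop (0:ℝ)] with x hx0
    have := Real.rpow_pos_of_pos hx0 (-κ / (1 - κ))
    positivity
  exact (Asymptotics.isEquivalent_iff_tendsto_one hne).mpr (by simpa [Pi.div_def] using hratio)
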